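/- Let H0 and H1 be complex Hilbert spaces, r ≥ 0, δ > 0, and let A0 on H0 and A1 on H1 be bounded normal operators. Suppose there is μ ∈ ℂ such that spectrum(A0) is contained in the closed disk of radius r centered at μ, while spectrum(A1) is disjoint from the open disk of radius r + δ centered at μ. Then for every bounded operator Y : H0 → H1 the Sylvester equation X A0 − A1 X = Y has a unique bounded solution X, and this solution satisfies δ·‖X‖ ≤ ‖Y‖. (Corollary 3.5 of the paper.) -/

import Mathlib

open Pointwise

open ContinuousLinearMap in
private lemma aux_norm_pow_le {H : Type*} [NormedAddCommGroup H] [NormedSpace ℂ H]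
    (T : H →L[ℂ] H) : ∀ n : ℕ, ‖T ^ n‖ ≤ ‖T‖ ^ n := by
  intro n
  induction n with
  | zero => simpa [pow_zero, ContinuousLinearMap.one_def] using
      ContinuousLinearMap.norm_id_le (𝕜 := ℂ) (E := H)
  | succ n ih =>
      rw [pow_succ, pow_succ]
      exact le_trans (norm_mul_le _ _) (mul_le_mul_of_nonneg_right ih (norm_nonneg _))

private lemma aux_isStarNormal_sub_algebraMap {A : Type*} [Ring A] [StarRing A]
    [Algebra ℂ A] [StarModule ℂ A] (a : A) (ha : IsStarNormal a) (μ : ℂ) :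
    IsStarNormal (a - algebraMap ℂ A μ) := by
  constructor
  rw [star_sub, ← algebraMap_star_comm]
  exact ((ha.star_comm_self.sub_right (Algebra.commute_algebraMap_right μ (star a))).sub_left
    ((Algebra.commute_algebraMap_left (star μ) a).sub_right (Algebra.commute_algebraMap_left _ _)))

private lemma aux_isStarNormal_units_inv {A : Type*} [Monoid A] [StarMul A] (u : Aˣ)
    (h : IsStarNormal (u : A)) : IsStarNormal ((↑u⁻¹ : A)) := by
  constructor
  rw [← Units.coe_star_inv]
  have hc : Commute ((star u : Aˣ) : A) (u : A) := by
    rw [Units.coe_star]; exact h.star_comm_self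
  exact (((hc.units_inv_right).symm.units_inv_right).symm)


private lemma aux_norm_le_of_spec {H : Type*} [NormedAddCommGroup H] [InnerProductSpace ℂ H]
    [CompleteSpace H] (a : H →L[ℂ] H) (han : IsStarNormal a) {ρ : ℝ} (hρ : 0 ≤ ρ)
    (hspec : ∀ z ∈ spectrum ℂ a, ‖z‖ ≤ ρ) : ‖a‖ ≤ ρ := by
  haveI := han
  have h1 : spectralRadius ℂ a = ‖a‖₊ := IsStarNormal.spectralRadius_eq_nnnorm a
  have h2 : spectralRadius ℂ a ≤ (ρ.toNNReal : ENNReal) := by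
    rw [spectralRadius]
    refine iSup₂_le fun z hz => ?_
    rw [ENNReal.coe_le_coe, ← NNReal.coe_le_coe, coe_nnnorm, Real.coe_toNNReal _ hρ]
    exact hspec z hz
  rw [h1, ENNReal.coe_le_coe, ← NNReal.coe_le_coe, coe_nnnorm,
    Real.coe_toNNReal _ hρ] at h2
  exact h2

set_option maxHeartbeats 1000000 in
/-- Corollary 3.5 of the paper: if `A0` and `A1` are bounded normal operators,
`spectrum(A0)` lies in the closed disk of radius `r` centered at `μ`, and `spectrum(A1)`
is disjoint from the open disk of radius `r + δ` centered at `μ`, then for every bounded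
`Y : H0 → H1` the Sylvester equation `X A0 - A1 X = Y` has a unique bounded solution `X`,
and this solution satisfies `δ‖X‖ ≤ ‖Y‖`. -/
theorem sylvester_normal_disk_separation
    {H0 : Type*} [NormedAddCommGroup H0] [InnerProductSpace ℂ H0] [CompleteSpace H0]
    {H1 : Type*} [NormedAddCommGroup H1] [InnerProductSpace ℂ H1] [CompleteSpace H1]
    (A0 : H0 →L[ℂ] H0) (A1 : H1 →L[ℂ] H1) (r δ : ℝ) (hr : 0 ≤ r) (hδ : 0 < δ)
    (hA0 : IsStarNormal A0) (hA1 : IsStarNormal A1) (μ : ℂ)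
    (hs0 : spectrum ℂ A0 ⊆ Metric.closedBall μ r)
    (hs1 : spectrum ℂ A1 ∩ Metric.ball μ (r + δ) = ∅)
    (Y : H0 →L[ℂ] H1) :
    (∃! X : H0 →L[ℂ] H1, X ∘L A0 - A1 ∘L X = Y) ∧
      ∀ X : H0 →L[ℂ] H1, X ∘L A0 - A1 ∘L X = Y → δ * ‖X‖ ≤ ‖Y‖ := by
  have hrδ : (0:ℝ) < r + δ := by linarith
  -- shifted operators
  set a0 : H0 →L[ℂ] H0 := A0 - algebraMap ℂ _ μ with ha0def
  set a1 : H1 →L[ℂ] H1 := A1 - algebraMap ℂ _ μ with ha1def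
  have ha0n : IsStarNormal a0 := aux_isStarNormal_sub_algebraMap A0 hA0 μ
  have ha1n : IsStarNormal a1 := aux_isStarNormal_sub_algebraMap A1 hA1 μ
  -- spectra of shifted operators
  have hσ0 : spectrum ℂ a0 = spectrum ℂ A0 - {μ} := (spectrum.sub_singleton_eq A0 μ).symm
  have hσ1 : spectrum ℂ a1 = spectrum ℂ A1 - {μ} := (spectrum.sub_singleton_eq A1 μ).symm
  have hσ0' : ∀ z ∈ spectrum ℂ a0, ‖z‖ ≤ r := by
    intro z hz
    rw [hσ0, Set.mem_sub] at hz
    obtain ⟨x, hx, y, hy, hxy⟩ := hz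
    rw [Set.mem_singleton_iff] at hy
    rw [← hxy, hy]
    simpa [Complex.dist_eq] using Metric.mem_closedBall.mp (hs0 hx)
  have hσ1' : ∀ z ∈ spectrum ℂ a1, r + δ ≤ ‖z‖ := by
    intro z hz
    rw [hσ1, Set.mem_sub] at hz
    obtain ⟨x, hx, y, hy, hxy⟩ := hz
    rw [Set.mem_singleton_iff] at hy
    rw [← hxy, hy]
    by_contra hlt
    push_neg at hlt
    have hmem : x ∈ spectrum ℂ A1 ∩ Metric.ball μ (r + δ) := by
      refine ⟨hx, ?_⟩
      rw [Metric.mem_ball, Complex.dist_eq]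
      exact hlt
    rw [hs1] at hmem
    exact hmem
  have ha0r : ‖a0‖ ≤ r := aux_norm_le_of_spec a0 ha0n hr hσ0'
  -- a1 is invertible
  have hunit : IsUnit a1 := by
    apply spectrum.isUnit_of_zero_notMem (R := ℂ)
    intro h0
    have := hσ1' 0 h0
    simp at this; linarith
  set u : (H1 →L[ℂ] H1)ˣ := hunit.unit with hudef
  have hu : (u : H1 →L[ℂ] H1) = a1 := hunit.unit_spec
  set B : H1 →L[ℂ] H1 := ↑u⁻¹ with hBdef
  have hBn : IsStarNormal B := by
    refine aux_isStarNormal_units_inv u ?_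
    rw [hu]; exact ha1n
  have hBspec : ∀ z ∈ spectrum ℂ B, ‖z‖ ≤ (r + δ)⁻¹ := by
    intro z hz
    have : z ∈ (spectrum ℂ (u : H1 →L[ℂ] H1))⁻¹ := by
      rw [spectrum.map_inv u]; exact hz
    rw [Set.mem_inv] at this
    rw [hu] at this
    have hge : r + δ ≤ ‖z⁻¹‖ := hσ1' _ this
    have hz0 : z ≠ 0 := by
      intro h; rw [h] at hge; simp at hge; linarith
    rw [norm_inv] at hge
    rw [← inv_inv ‖z‖]
    exact inv_anti₀ hrδ hge
  have hBr : ‖B‖ ≤ (r + δ)⁻¹ := aux_norm_le_of_spec B hBn (by positivity) hBspec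
  have hB1 : B ∘L a1 = 1 := by
    rw [← hu, ← ContinuousLinearMap.mul_def, hBdef, u.inv_mul]
  have hB2 : a1 ∘L B = 1 := by
    rw [← hu, ← ContinuousLinearMap.mul_def, hBdef, u.mul_inv]
  -- translation between original and shifted equations
  have htrans : ∀ X : H0 →L[ℂ] H1, X ∘L a0 - a1 ∘L X = X ∘L A0 - A1 ∘L X := by
    intro X
    have h1 : X ∘L algebraMap ℂ (H0 →L[ℂ] H0) μ = μ • X := by
      rw [Algebra.algebraMap_eq_smul_one]
      ext x; simp
    have h2 : (algebraMap ℂ (H1 →L[ℂ] H1) μ) ∘L X = μ • X := by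
      rw [Algebra.algebraMap_eq_smul_one]
      ext x; simp
    rw [ha0def, ha1def, ContinuousLinearMap.comp_sub, ContinuousLinearMap.sub_comp, h1, h2]
    abel
  -- the geometric data
  set q : ℝ := r / (r + δ) with hqdef
  have hq0 : 0 ≤ q := by positivity
  have hq1 : q < 1 := by
    rw [hqdef, div_lt_one hrδ]; linarith
  set f : ℕ → (H0 →L[ℂ] H1) := fun k => (B ^ (k + 1)) ∘L (Y ∘L (a0 ^ k)) with hfdef
  set g : ℕ → (H0 →L[ℂ] H1) := fun k => (B ^ k) ∘L (Y ∘L (a0 ^ k)) with hgdef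
  have hgbound : ∀ k, ‖g k‖ ≤ ‖Y‖ * q ^ k := by
    intro k
    calc ‖(B ^ k) ∘L (Y ∘L (a0 ^ k))‖ ≤ ‖B ^ k‖ * (‖Y‖ * ‖a0 ^ k‖) :=
          le_trans (ContinuousLinearMap.opNorm_comp_le _ _)
            (mul_le_mul_of_nonneg_left (ContinuousLinearMap.opNorm_comp_le _ _)
              (norm_nonneg _))
      _ ≤ ((r + δ)⁻¹) ^ k * (‖Y‖ * r ^ k) := by
          apply mul_le_mul
          · exact le_trans (aux_norm_pow_le B k)
              (pow_le_pow_left₀ (norm_nonneg _) hBr k)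
          · exact mul_le_mul_of_nonneg_left
              (le_trans (aux_norm_pow_le a0 k) (pow_le_pow_left₀ (norm_nonneg _) ha0r k))
              (norm_nonneg _)
          · positivity
          · positivity
      _ = ‖Y‖ * q ^ k := by
          rw [hqdef, div_pow, div_eq_mul_inv, ← inv_pow]; ring
  have hfbound : ∀ k, ‖f k‖ ≤ ((r + δ)⁻¹ * ‖Y‖) * q ^ k := by
    intro k
    calc ‖(B ^ (k+1)) ∘L (Y ∘L (a0 ^ k))‖ ≤ ‖B ^ (k+1)‖ * (‖Y‖ * ‖a0 ^ k‖) :=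
          le_trans (ContinuousLinearMap.opNorm_comp_le _ _)
            (mul_le_mul_of_nonneg_left (ContinuousLinearMap.opNorm_comp_le _ _)
              (norm_nonneg _))
      _ ≤ ((r + δ)⁻¹) ^ (k+1) * (‖Y‖ * r ^ k) := by
          apply mul_le_mul
          · exact le_trans (aux_norm_pow_le B (k+1))
              (pow_le_pow_left₀ (norm_nonneg _) hBr (k+1))
          · exact mul_le_mul_of_nonneg_left
              (le_trans (aux_norm_pow_le a0 k) (pow_le_pow_left₀ (norm_nonneg _) ha0r k))
              (norm_nonneg _)
          · positivity
          · positivity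
      _ = ((r + δ)⁻¹ * ‖Y‖) * q ^ k := by
          rw [hqdef, div_pow, div_eq_mul_inv, ← inv_pow, pow_succ]; ring
  have hgeo : Summable (fun k : ℕ => q ^ k) := summable_geometric_of_lt_one hq0 hq1
  have hsumf : Summable f :=
    Summable.of_norm_bounded (hgeo.mul_left _) hfbound
  have hsumg : Summable g :=
    Summable.of_norm_bounded (hgeo.mul_left _) hgbound
  -- candidate solution
  set X₀ : H0 →L[ℂ] H1 := -∑' k, f k with hX₀def
  -- X₀ solves the shifted equation
  have hfcomp : ∀ k, (f k) ∘L a0 = g (k + 1) := by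
    intro k
    rw [hfdef, hgdef]
    rw [ContinuousLinearMap.comp_assoc, ContinuousLinearMap.comp_assoc,
      ← ContinuousLinearMap.mul_def (a0 ^ k) a0, ← pow_succ]
  have ha1comp : ∀ k, a1 ∘L (f k) = g k := by
    intro k
    have hpow : a1 ∘L (B ^ (k + 1)) = B ^ k := by
      rw [pow_succ' B k, ContinuousLinearMap.mul_def B (B ^ k),
        ← ContinuousLinearMap.comp_assoc, hB2, ContinuousLinearMap.one_def,
        ContinuousLinearMap.id_comp]
    calc a1 ∘L (f k) = (a1 ∘L (B ^ (k + 1))) ∘L (Y ∘L (a0 ^ k)) := by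
          rw [hfdef, ContinuousLinearMap.comp_assoc]
      _ = g k := by rw [hpow, hgdef]
  have hX₀solves : X₀ ∘L a0 - a1 ∘L X₀ = Y := by
    have hrc : X₀ ∘L a0 = -∑' k, g (k + 1) := by
      have h := ContinuousLinearMap.map_tsum
        (((ContinuousLinearMap.compL ℂ H0 H0 H1).flip a0)) hsumf
      simp only [ContinuousLinearMap.flip_apply, ContinuousLinearMap.compL_apply] at h
      rw [hX₀def, ContinuousLinearMap.neg_comp, h]
      exact congrArg Neg.neg (tsum_congr hfcomp)
    have hlc : a1 ∘L X₀ = -∑' k, g k := by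
      have h := ContinuousLinearMap.map_tsum
        ((ContinuousLinearMap.compL ℂ H0 H1 H1 a1)) hsumf
      simp only [ContinuousLinearMap.compL_apply] at h
      rw [hX₀def, ContinuousLinearMap.comp_neg, h]
      exact congrArg Neg.neg (tsum_congr ha1comp)
    rw [hrc, hlc]
    have hshift : ∑' k, g k = g 0 + ∑' k, g (k + 1) := hsumg.tsum_eq_zero_add
    have hg0 : g 0 = Y := by
      rw [hgdef]
      simp [ContinuousLinearMap.one_def]
    rw [sub_neg_eq_add, hshift, hg0]
    abel
  -- every solution equals X₀
  have huniq : ∀ X : H0 →L[ℂ] H1, X ∘L A0 - A1 ∘L X = Y → X = X₀ := by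
    intro X hX
    have hXa : X ∘L a0 - Y = a1 ∘L X := by
      have h := htrans X
      rw [hX] at h
      rw [← h]
      abel
    set T : ℕ → (H0 →L[ℂ] H1) := fun n => (B ^ n) ∘L (X ∘L (a0 ^ n)) with hTdef
    have hTstep : ∀ n, T (n + 1) = T n + f n := by
      intro n
      have e1 : T (n + 1) - f n = (B ^ n) ∘L ((B ∘L (X ∘L a0 - Y)) ∘L (a0 ^ n)) := by
        rw [hTdef, hfdef]
        simp only [pow_succ B n, pow_succ' a0 n, ContinuousLinearMap.mul_def,
          ContinuousLinearMap.comp_sub, ContinuousLinearMap.sub_comp,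
          ContinuousLinearMap.comp_assoc]
      have e2 : T (n + 1) - f n = T n := by
        rw [e1, hXa, ← ContinuousLinearMap.comp_assoc B a1 X, hB1,
          ContinuousLinearMap.one_def, ContinuousLinearMap.id_comp]
      rw [← e2]
      abel
    have hTsum : ∀ n, T n = X + ∑ k ∈ Finset.range n, f k := by
      intro n
      induction n with
      | zero =>
          simp [hTdef, pow_zero, ContinuousLinearMap.one_def,
            ContinuousLinearMap.id_comp, ContinuousLinearMap.comp_id]
      | succ n ih =>
          rw [hTstep n, ih, Finset.sum_range_succ]
          abel
    have hTnorm : ∀ n, ‖T n‖ ≤ ‖X‖ * q ^ n := by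
      intro n
      calc ‖T n‖ ≤ ‖B ^ n‖ * (‖X‖ * ‖a0 ^ n‖) :=
            le_trans (ContinuousLinearMap.opNorm_comp_le _ _)
              (mul_le_mul_of_nonneg_left (ContinuousLinearMap.opNorm_comp_le _ _)
                (norm_nonneg _))
        _ ≤ ((r + δ)⁻¹) ^ n * (‖X‖ * r ^ n) := by
            apply mul_le_mul
            · exact le_trans (aux_norm_pow_le B n)
                (pow_le_pow_left₀ (norm_nonneg _) hBr n)
            · exact mul_le_mul_of_nonneg_left
                (le_trans (aux_norm_pow_le a0 n) (pow_le_pow_left₀ (norm_nonneg _) ha0r n))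
                (norm_nonneg _)
            · positivity
            · positivity
        _ = ‖X‖ * q ^ n := by
            rw [hqdef, div_pow, div_eq_mul_inv, ← inv_pow]
            ring
    have hT0 : Filter.Tendsto T Filter.atTop (nhds 0) := by
      rw [tendsto_zero_iff_norm_tendsto_zero]
      refine squeeze_zero (fun n => norm_nonneg _) hTnorm ?_
      have := (tendsto_pow_atTop_nhds_zero_of_lt_one hq0 hq1).const_mul ‖X‖
      simpa using this
    have hps : Filter.Tendsto T Filter.atTop (nhds (X + ∑' k, f k)) := by
      have h := (hsumf.hasSum.tendsto_sum_nat).const_add X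
      have heq : (fun n => X + ∑ k ∈ Finset.range n, f k) = T := by
        funext n
        exact (hTsum n).symm
      rwa [heq] at h
    have hzero : X + ∑' k, f k = 0 := tendsto_nhds_unique hps hT0
    rw [hX₀def]
    exact eq_neg_of_add_eq_zero_left hzero
  -- norm bound for X₀
  have hnormsum : Summable fun k => ‖f k‖ :=
    Summable.of_nonneg_of_le (fun k => norm_nonneg _) hfbound (hgeo.mul_left _)
  have hX₀bound : δ * ‖X₀‖ ≤ ‖Y‖ := by
    have h1 : ‖X₀‖ ≤ ∑' k, ((r + δ)⁻¹ * ‖Y‖) * q ^ k := by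
      rw [hX₀def, norm_neg]
      exact le_trans (norm_tsum_le_tsum_norm hnormsum)
        (Summable.tsum_le_tsum hfbound hnormsum (hgeo.mul_left _))
    have h2 : ∑' k : ℕ, ((r + δ)⁻¹ * ‖Y‖) * q ^ k = ‖Y‖ / δ := by
      rw [tsum_mul_left, tsum_geometric_of_lt_one hq0 hq1, hqdef]
      have h3 : 1 - r / (r + δ) = δ / (r + δ) := by
        field_simp
        ring
      rw [h3]
      field_simp
    rw [h2] at h1
    rw [mul_comm]
    exact (le_div_iff₀ hδ).mp h1
  have hX₀orig : X₀ ∘L A0 - A1 ∘L X₀ = Y := by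
    rw [← htrans X₀]
    exact hX₀solves
  exact ⟨⟨X₀, hX₀orig, fun X hX => huniq X hX⟩, fun X hX => by rw [huniq X hX]; exact hX₀bound⟩
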